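/- arXiv:2504.11254 — 3 statements merged into one kernel-verified Lean document; each statement's English description precedes it below -/
import Mathlib

section
/- Let E be a finite-dimensional real inner product space, let φ : E → ℝ be convex and differentiable with L-Lipschitz gradient for some L > 0, and suppose the set of minimizers of φ is nonempty. Let 0 < γ ≤ 1/L and define v_{k+1} = v_k − γ•∇φ(v_k) from an arbitrary starting point v_0. Then there exists a constant C > 0 such that ‖v_k − v_{k−1}‖ ≤ C/√k for every k ≥ 1. -/
open RealInnerProductSpace

section aux
variable {E : Type*} [NormedAddCommGroup E] [InnerProductSpace ℝ E] [CompleteSpace E]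

private lemma dgd_line_deriv (φ : E → ℝ) (φ' : E → E) (hdiff : ∀ x : E, HasGradientAt φ (φ' x) x)
    (x y : E) (t : ℝ) :
    HasDerivAt (fun t : ℝ => φ (x + t • (y - x))) ⟪φ' (x + t • (y - x)), y - x⟫ t := by
  have hc : HasDerivAt (fun t : ℝ => x + t • (y - x)) (y - x) t := by
    simpa using ((hasDerivAt_id t).smul_const (y - x)).const_add x
  have h := ((hdiff (x + t • (y - x))).hasFDerivAt).comp_hasDerivAt t hc
  simpa [InnerProductSpace.toDual_apply_apply, Function.comp_def] using h

private lemma dgd_grad_ineq (φ : E → ℝ) (φ' : E → E)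
    (hconv : ConvexOn ℝ Set.univ φ) (hdiff : ∀ x : E, HasGradientAt φ (φ' x) x)
    (x y : E) : φ x + ⟪φ' x, y - x⟫ ≤ φ y := by
  set g : ℝ → ℝ := fun t => φ (x + t • (y - x)) with hg
  have hgconv : ConvexOn ℝ Set.univ g := by
    have h := hconv.comp_affineMap (AffineMap.lineMap x y : ℝ →ᵃ[ℝ] E)
    have : g = (φ ∘ (AffineMap.lineMap x y : ℝ →ᵃ[ℝ] E)) := by
      funext t
      simp [hg, AffineMap.lineMap_apply, add_comm]
    rw [this]
    simpa using h
  have hs := hgconv.le_slope_of_hasDerivAt (Set.mem_univ 0) (Set.mem_univ 1) one_pos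
    (by simpa using dgd_line_deriv φ φ' hdiff x y 0)
  have h0 : g 0 = φ x := by simp [hg]
  have h1 : g 1 = φ y := by simp [hg]
  rw [slope_def_field] at hs
  simp [h0, h1] at hs
  linarith

private lemma dgd_descent (φ : E → ℝ) (φ' : E → E) (L : ℝ) (hL : 0 < L)
    (hdiff : ∀ x : E, HasGradientAt φ (φ' x) x)
    (hlip : ∀ x y : E, ‖φ' x - φ' y‖ ≤ L * ‖x - y‖)
    (x y : E) : φ y ≤ φ x + ⟪φ' x, y - x⟫ + L / 2 * ‖y - x‖ ^ 2 := by
  have hcont : Continuous φ' := by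
    have : LipschitzWith (Real.toNNReal L) φ' := by
      apply LipschitzWith.of_dist_le_mul
      intro a b
      simpa [dist_eq_norm, Real.coe_toNNReal L hL.le] using hlip a b
    exact this.continuous
  set g' : ℝ → ℝ := fun t => ⟪φ' (x + t • (y - x)), y - x⟫ with hg'
  have hg'cont : Continuous g' := by
    apply Continuous.inner
    · exact hcont.comp (by continuity)
    · exact continuous_const
  have hftc : ∫ t in (0:ℝ)..1, g' t = φ y - φ x := by
    have := intervalIntegral.integral_eq_sub_of_hasDerivAt
      (f := fun t : ℝ => φ (x + t • (y - x))) (f' := g')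
      (fun t _ => dgd_line_deriv φ φ' hdiff x y t)
      (hg'cont.intervalIntegrable 0 1)
    simpa using this
  have hbound : ∀ t ∈ Set.Icc (0:ℝ) 1, g' t ≤ g' 0 + L * ‖y - x‖ ^ 2 * t := by
    intro t ht
    have h1 : g' t - g' 0 = ⟪φ' (x + t • (y - x)) - φ' x, y - x⟫ := by
      simp [hg', inner_sub_left]
    have h2 : ⟪φ' (x + t • (y - x)) - φ' x, y - x⟫ ≤
        ‖φ' (x + t • (y - x)) - φ' x‖ * ‖y - x‖ := real_inner_le_norm _ _
    have h3 : ‖φ' (x + t • (y - x)) - φ' x‖ ≤ L * (t * ‖y - x‖) := by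
      have := hlip (x + t • (y - x)) x
      have he : ‖x + t • (y - x) - x‖ = t * ‖y - x‖ := by
        simp [norm_smul, abs_of_nonneg ht.1]
      rwa [he] at this
    nlinarith [norm_nonneg (y - x), ht.1]
  have hmono : ∫ t in (0:ℝ)..1, g' t ≤ ∫ t in (0:ℝ)..1, (g' 0 + L * ‖y - x‖ ^ 2 * t) := by
    apply intervalIntegral.integral_mono_on zero_le_one
      (hg'cont.intervalIntegrable 0 1)
      ((continuous_const.add (continuous_const.mul continuous_id)).intervalIntegrable 0 1)
    exact hbound
  have hval : ∫ t in (0:ℝ)..1, (g' 0 + L * ‖y - x‖ ^ 2 * t) = g' 0 + L / 2 * ‖y - x‖ ^ 2 := by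
    have : ∫ t in (0:ℝ)..1, (g' 0 + L * ‖y - x‖ ^ 2 * t)
        = (∫ _t in (0:ℝ)..1, g' 0) + ∫ t in (0:ℝ)..1, L * ‖y - x‖ ^ 2 * t := by
      apply intervalIntegral.integral_add intervalIntegrable_const
      exact ((continuous_const.mul continuous_id).intervalIntegrable 0 1)
    rw [this, intervalIntegral.integral_const_mul, integral_id]
    simp
    ring
  have hg0 : g' 0 = ⟪φ' x, y - x⟫ := by simp [hg']
  rw [hftc] at hmono
  rw [hval, hg0] at hmono
  linarith

private lemma dgd_lower_bound (φ : E → ℝ) (φ' : E → E) (L : ℝ) (hL : 0 < L)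
    (hconv : ConvexOn ℝ Set.univ φ)
    (hdiff : ∀ x : E, HasGradientAt φ (φ' x) x)
    (hlip : ∀ x y : E, ‖φ' x - φ' y‖ ≤ L * ‖x - y‖)
    (x y : E) :
    φ x + ⟪φ' x, y - x⟫ + 1 / (2 * L) * ‖φ' y - φ' x‖ ^ 2 ≤ φ y := by
  set w : E := φ' y - φ' x with hw
  set z : E := y - (1 / L) • w with hz
  have hi : φ x + ⟪φ' x, z - x⟫ ≤ φ z := dgd_grad_ineq φ φ' hconv hdiff x z
  have hii : φ z ≤ φ y + ⟪φ' y, z - y⟫ + L / 2 * ‖z - y‖ ^ 2 :=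
    dgd_descent φ φ' L hL hdiff hlip y z
  have hzy : z - y = -((1 / L) • w) := by rw [hz]; abel
  have h1 : ⟪φ' y, z - y⟫ = -(1 / L) * ⟪φ' y, w⟫ := by
    rw [hzy, inner_neg_right, real_inner_smul_right]; ring
  have h2 : ‖z - y‖ ^ 2 = (1 / L) ^ 2 * ‖w‖ ^ 2 := by
    rw [hzy, norm_neg, norm_smul, Real.norm_eq_abs,
      abs_of_pos (by positivity : (0:ℝ) < 1 / L), mul_pow]
  have h3 : ⟪φ' x, z - x⟫ = ⟪φ' x, y - x⟫ - 1 / L * ⟪φ' x, w⟫ := by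
    have : z - x = (y - x) - (1 / L) • w := by rw [hz]; abel
    rw [this, inner_sub_right, real_inner_smul_right]
  have h4 : ⟪φ' y, w⟫ - ⟪φ' x, w⟫ = ‖w‖ ^ 2 := by
    rw [← inner_sub_left, ← hw, real_inner_self_eq_norm_sq]
  rw [h1, h2] at hii
  rw [h3] at hi
  have h5 : 1 / L * ⟪φ' y, w⟫ - 1 / L * ⟪φ' x, w⟫ = 1 / L * ‖w‖ ^ 2 := by
    rw [← mul_sub, h4]
  have h6 : L / 2 * ((1 / L) ^ 2 * ‖w‖ ^ 2) = 1 / (2 * L) * ‖w‖ ^ 2 := by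
    field_simp
  have h7 : 1 / L * ‖w‖ ^ 2 = 2 * (1 / (2 * L) * ‖w‖ ^ 2) := by
    field_simp
  linarith

private lemma dgd_cocoercive (φ : E → ℝ) (φ' : E → E) (L : ℝ) (hL : 0 < L)
    (hconv : ConvexOn ℝ Set.univ φ)
    (hdiff : ∀ x : E, HasGradientAt φ (φ' x) x)
    (hlip : ∀ x y : E, ‖φ' x - φ' y‖ ≤ L * ‖x - y‖)
    (x y : E) :
    1 / L * ‖φ' y - φ' x‖ ^ 2 ≤ ⟪φ' y - φ' x, y - x⟫ := by
  have hxy := dgd_lower_bound φ φ' L hL hconv hdiff hlip x y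
  have hyx := dgd_lower_bound φ φ' L hL hconv hdiff hlip y x
  have hn : ‖φ' x - φ' y‖ = ‖φ' y - φ' x‖ := norm_sub_rev _ _
  rw [hn] at hyx
  have h1 : ⟪φ' y - φ' x, y - x⟫ = ⟪φ' y, y - x⟫ - ⟪φ' x, y - x⟫ := inner_sub_left _ _ _
  have h2 : ⟪φ' y, x - y⟫ = -⟪φ' y, y - x⟫ := by
    rw [show x - y = -(y - x) by abel, inner_neg_right]
  rw [h2] at hyx
  have h3 : 1 / (2 * L) * ‖φ' y - φ' x‖ ^ 2 + 1 / (2 * L) * ‖φ' y - φ' x‖ ^ 2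
      = 1 / L * ‖φ' y - φ' x‖ ^ 2 := by
    field_simp
    ring
  linarith

private lemma dgd_contract (φ' : E → E) (L γ : ℝ) (hL : 0 < L) (hγ0 : 0 < γ) (hγ1 : γ ≤ 1 / L)
    (hcoco : ∀ x y : E, 1 / L * ‖φ' y - φ' x‖ ^ 2 ≤ ⟪φ' y - φ' x, y - x⟫)
    (a b : E) :
    ‖(a - γ • φ' a) - (b - γ • φ' b)‖ ^ 2 + γ ^ 2 * ‖φ' a - φ' b‖ ^ 2 ≤ ‖a - b‖ ^ 2 := by
  set u : E := a - b with hu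
  set w : E := φ' a - φ' b with hw
  have he : (a - γ • φ' a) - (b - γ • φ' b) = u - γ • w := by
    rw [hu, hw, smul_sub]; abel
  rw [he]
  have hexp : ‖u - γ • w‖ ^ 2 = ‖u‖ ^ 2 - 2 * (γ * ⟪u, w⟫) + γ ^ 2 * ‖w‖ ^ 2 := by
    rw [norm_sub_sq_real, real_inner_smul_right, norm_smul, Real.norm_eq_abs,
      abs_of_pos hγ0, mul_pow]
  have hc := hcoco b a
  have hcomm : ⟪u, w⟫ = ⟪w, u⟫ := real_inner_comm _ _
  rw [hexp, hcomm]
  have key1 : γ * (1 / L * ‖w‖ ^ 2) ≤ γ * ⟪w, u⟫ := mul_le_mul_of_nonneg_left hc hγ0.le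
  have key2 : γ * γ * ‖w‖ ^ 2 ≤ γ * (1 / L) * ‖w‖ ^ 2 :=
    mul_le_mul_of_nonneg_right (mul_le_mul_of_nonneg_left hγ1 hγ0.le) (sq_nonneg _)
  nlinarith [key1, key2]

end aux

/-- Rate for the successive differences of gradient descent with step
`0 < γ ≤ 1/L` on a convex function with `L`-Lipschitz gradient and a
nonempty set of minimizers: `‖v_k - v_{k-1}‖ ≤ C / √k`. -/
theorem stmt_3
    {E : Type*} [NormedAddCommGroup E] [InnerProductSpace ℝ E] [FiniteDimensional ℝ E]
    (φ : E → ℝ) (φ' : E → E) (L γ : ℝ) (hL : 0 < L)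
    (hconv : ConvexOn ℝ Set.univ φ)
    (hdiff : ∀ x : E, HasGradientAt φ (φ' x) x)
    (hlip : ∀ x y : E, ‖φ' x - φ' y‖ ≤ L * ‖x - y‖)
    (hmin : ∃ m : E, IsMinOn φ Set.univ m)
    (hγ0 : 0 < γ) (hγ1 : γ ≤ 1 / L)
    (v : ℕ → E) (hrec : ∀ k : ℕ, v (k + 1) = v k - γ • φ' (v k)) :
    ∃ C > (0 : ℝ), ∀ k : ℕ, 1 ≤ k → ‖v k - v (k - 1)‖ ≤ C / Real.sqrt k := by
  obtain ⟨m, hm⟩ := hmin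
  have hcoco := dgd_cocoercive φ φ' L hL hconv hdiff hlip
  have hm0 : φ' m = 0 := by
    have hloc : IsLocalMin φ m := hm.isLocalMin (by simp)
    have h := hloc.hasFDerivAt_eq_zero (hdiff m).hasFDerivAt
    have h2 := congrArg (fun f => (InnerProductSpace.toDual ℝ E).symm f) h
    simpa using h2
  have hcon := dgd_contract φ' L γ hL hγ0 hγ1 hcoco
  set D : ℕ → ℝ := fun k => ‖v (k + 1) - v k‖ with hD
  have hDnn : ∀ k, 0 ≤ D k := fun k => norm_nonneg _
  have hstep : ∀ k, ‖v (k + 1) - m‖ ^ 2 + D k ^ 2 ≤ ‖v k - m‖ ^ 2 := by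
    intro k
    have h := hcon (v k) m
    rw [hm0] at h
    simp only [smul_zero, sub_zero] at h
    have h1 : v (k + 1) - m = (v k - γ • φ' (v k)) - m := by rw [hrec k]
    have h2 : D k ^ 2 = γ ^ 2 * ‖φ' (v k)‖ ^ 2 := by
      simp only [hD]
      rw [hrec k]
      have he : v k - γ • φ' (v k) - v k = -(γ • φ' (v k)) := by abel
      rw [he, norm_neg, norm_smul, Real.norm_eq_abs, abs_of_pos hγ0, mul_pow]
    rw [h1, h2]
    exact h
  have hmono : ∀ k, D (k + 1) ≤ D k := by
    intro k
    have h := hcon (v (k + 1)) (v k)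
    have h1 : v (k + 2) - v (k + 1) = (v (k + 1) - γ • φ' (v (k + 1))) - (v k - γ • φ' (v k)) := by
      rw [hrec (k + 1), hrec k]
    have hsq : D (k + 1) ^ 2 ≤ D k ^ 2 := by
      simp only [hD]
      rw [show k + 1 + 1 = k + 2 from rfl, h1]
      nlinarith [h, sq_nonneg (γ * ‖φ' (v (k + 1)) - φ' (v k)‖), sq_nonneg ‖φ' (v (k + 1)) - φ' (v k)‖]
    exact le_of_pow_le_pow_left₀ two_ne_zero (hDnn k) hsq
  have hant : Antitone D := antitone_nat_of_succ_le hmono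
  have hsum : ∀ k, ∑ j ∈ Finset.range k, D j ^ 2 ≤ ‖v 0 - m‖ ^ 2 := by
    intro k
    have haux : ∀ k, ‖v k - m‖ ^ 2 + ∑ j ∈ Finset.range k, D j ^ 2 ≤ ‖v 0 - m‖ ^ 2 := by
      intro k
      induction k with
      | zero => simp
      | succ n ih =>
        rw [Finset.sum_range_succ]
        have := hstep n
        linarith
    have hk := haux k
    nlinarith [sq_nonneg ‖v k - m‖]
  set S : ℝ := ‖v 0 - m‖ ^ 2 with hS
  have hSnn : 0 ≤ S := sq_nonneg _
  refine ⟨Real.sqrt S + 1, by positivity, ?_⟩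
  intro k hk
  obtain ⟨n, rfl⟩ : ∃ n, k = n + 1 := ⟨k - 1, (Nat.succ_pred_eq_of_pos hk).symm⟩
  simp only [Nat.add_sub_cancel]
  have hcard : (n + 1 : ℝ) * D n ^ 2 ≤ S := by
    have hle : ∀ j ∈ Finset.range (n + 1), D n ^ 2 ≤ D j ^ 2 := by
      intro j hj
      exact pow_le_pow_left₀ (hDnn n) (hant (Nat.le_of_lt_succ (Finset.mem_range.mp hj))) 2
    calc (n + 1 : ℝ) * D n ^ 2 = ∑ _j ∈ Finset.range (n + 1), D n ^ 2 := by
          rw [Finset.sum_const, Finset.card_range, nsmul_eq_mul]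
          push_cast
          ring
      _ ≤ ∑ j ∈ Finset.range (n + 1), D j ^ 2 := Finset.sum_le_sum hle
      _ ≤ S := hsum (n + 1)
  have hnpos : (0:ℝ) < (n + 1 : ℕ) := by positivity
  have hDle : D n ≤ Real.sqrt S / Real.sqrt ((n:ℝ) + 1) := by
    have hdiv : D n ^ 2 ≤ S / ((n:ℝ) + 1) := by
      rw [le_div_iff₀ (by positivity)]
      nlinarith [hcard]
    calc D n = Real.sqrt (D n ^ 2) := (Real.sqrt_sq (hDnn n)).symm
      _ ≤ Real.sqrt (S / ((n:ℝ) + 1)) := Real.sqrt_le_sqrt hdiv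
      _ = Real.sqrt S / Real.sqrt ((n:ℝ) + 1) := Real.sqrt_div hSnn _
  have hsq : (0:ℝ) < Real.sqrt ((n:ℝ) + 1) := Real.sqrt_pos.mpr (by positivity)
  have hfin : D n ≤ (Real.sqrt S + 1) / Real.sqrt ((n:ℝ) + 1) := by
    calc D n ≤ Real.sqrt S / Real.sqrt ((n:ℝ) + 1) := hDle
      _ ≤ (Real.sqrt S + 1) / Real.sqrt ((n:ℝ) + 1) := by gcongr; linarith
  have hcast : ((n + 1 : ℕ) : ℝ) = (n:ℝ) + 1 := by push_cast; ring
  rw [hcast]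
  exact hfin
end

section
/- Let E be a real normed vector space, let F : E → E be nonexpansive, let γ ≥ 0, let y, y' ∈ E, and let (t_k)_{k≥0} be a sequence of real numbers with 0 ≤ t_k ≤ 1. Define two inertial sequences as follows: v_0 = v'_0, u_{−1} = u'_{−1}, and for k ≥ 0, u_k = F(v_k) − γ•y, u'_k = F(v'_k) − γ•y', v_{k+1} = u_k + t_k•(u_k − u_{k−1}), v'_{k+1} = u'_k + t_k•(u'_k − u'_{k−1}). Then for every k ≥ 0, ‖u_k − u'_k‖ ≤ Σ_{i=0}^{k−1} t_i (‖u_i − u_{i−1}‖ + ‖u'_i − u'_{i−1}‖) + γ (k+1) ‖y − y'‖. -/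
/-- Perturbation estimate for inertial iterations of a nonexpansive map `F`
with perturbed data `y`, `y'`.  Here `U k` stands for `u_{k-1}` (so
`U 0 = u_{-1}` and `U (k+1) = u_k`), and similarly for `U'`:
`‖u_k - u'_k‖ ≤ Σ_{i=0}^{k-1} t_i (‖u_i - u_{i-1}‖ + ‖u'_i - u'_{i-1}‖) + γ (k+1) ‖y - y'‖`. -/
theorem stmt_7
    {E : Type*} [NormedAddCommGroup E] [NormedSpace ℝ E]
    (F : E → E) (hF : ∀ x y : E, ‖F x - F y‖ ≤ ‖x - y‖)
    (γ : ℝ) (hγ : 0 ≤ γ) (y y' : E)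
    (t : ℕ → ℝ) (ht0 : ∀ k : ℕ, 0 ≤ t k) (ht1 : ∀ k : ℕ, t k ≤ 1)
    (v v' U U' : ℕ → E)
    (hv0 : v 0 = v' 0) (hU0 : U 0 = U' 0)
    (hu : ∀ k : ℕ, U (k + 1) = F (v k) - γ • y)
    (hu' : ∀ k : ℕ, U' (k + 1) = F (v' k) - γ • y')
    (hv : ∀ k : ℕ, v (k + 1) = U (k + 1) + t k • (U (k + 1) - U k))
    (hv' : ∀ k : ℕ, v' (k + 1) = U' (k + 1) + t k • (U' (k + 1) - U' k)) :
    ∀ k : ℕ, ‖U (k + 1) - U' (k + 1)‖ ≤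
      (∑ i ∈ Finset.range k, t i * (‖U (i + 1) - U i‖ + ‖U' (i + 1) - U' i‖))
        + γ * (k + 1) * ‖y - y'‖ := by
  -- key step: one iteration
  have hstep : ∀ k : ℕ, ‖U (k + 1) - U' (k + 1)‖ ≤ ‖v k - v' k‖ + γ * ‖y - y'‖ := by
    intro k
    have h1 : U (k + 1) - U' (k + 1) = (F (v k) - F (v' k)) - γ • (y - y') := by
      rw [hu k, hu' k, smul_sub]; abel
    rw [h1]
    calc ‖(F (v k) - F (v' k)) - γ • (y - y')‖
        ≤ ‖F (v k) - F (v' k)‖ + ‖γ • (y - y')‖ := norm_sub_le _ _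
      _ ≤ ‖v k - v' k‖ + γ * ‖y - y'‖ := by
          rw [norm_smul, Real.norm_of_nonneg hγ]
          exact add_le_add_left (hF _ _) _
  -- strengthened: bound for v
  have hvbound : ∀ k : ℕ, ‖v k - v' k‖ ≤
      (∑ i ∈ Finset.range k, t i * (‖U (i + 1) - U i‖ + ‖U' (i + 1) - U' i‖))
        + γ * k * ‖y - y'‖ := by
    intro k
    induction k with
    | zero => simp [hv0]
    | succ k ih =>
      push_cast
      have h2 : v (k + 1) - v' (k + 1)
          = (U (k + 1) - U' (k + 1)) + t k • ((U (k + 1) - U k) - (U' (k + 1) - U' k)) := by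
        rw [hv k, hv' k]; module
      calc ‖v (k + 1) - v' (k + 1)‖
          ≤ ‖U (k + 1) - U' (k + 1)‖ + ‖t k • ((U (k + 1) - U k) - (U' (k + 1) - U' k))‖ := by
            rw [h2]; exact norm_add_le _ _
        _ ≤ (‖v k - v' k‖ + γ * ‖y - y'‖)
              + t k * (‖U (k + 1) - U k‖ + ‖U' (k + 1) - U' k‖) := by
            apply add_le_add (hstep k)
            rw [norm_smul, Real.norm_of_nonneg (ht0 k)]
            exact mul_le_mul_of_nonneg_left (norm_sub_le _ _) (ht0 k)
        _ ≤ ((∑ i ∈ Finset.range k, t i * (‖U (i + 1) - U i‖ + ‖U' (i + 1) - U' i‖))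
              + γ * k * ‖y - y'‖ + γ * ‖y - y'‖)
              + t k * (‖U (k + 1) - U k‖ + ‖U' (k + 1) - U' k‖) := by
            gcongr
        _ = (∑ i ∈ Finset.range (k + 1), t i * (‖U (i + 1) - U i‖ + ‖U' (i + 1) - U' i‖))
              + γ * (k + 1) * ‖y - y'‖ := by
            rw [Finset.sum_range_succ]
            ring
  intro k
  calc ‖U (k + 1) - U' (k + 1)‖ ≤ ‖v k - v' k‖ + γ * ‖y - y'‖ := hstep k
    _ ≤ ((∑ i ∈ Finset.range k, t i * (‖U (i + 1) - U i‖ + ‖U' (i + 1) - U' i‖))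
          + γ * k * ‖y - y'‖) + γ * ‖y - y'‖ := add_le_add_left (hvbound k) _
    _ = (∑ i ∈ Finset.range k, t i * (‖U (i + 1) - U i‖ + ‖U' (i + 1) - U' i‖))
          + γ * (k + 1) * ‖y - y'‖ := by push_cast; ring
end

section
/- Let p, n ≥ 1, let P be a real p×p matrix that is an orthogonal projection (P = Pᵀ and P² = P), let H be a real symmetric positive semidefinite p×p matrix with H = P H P, and let X be a nonzero real n×p matrix such that the only vector v ∈ ℝᵖ with Xv = 0 and Pv = v is v = 0 (restricted injectivity of X on the range of P). Define M = P − ‖X‖⁻² · P (I + H)⁻¹ P Xᵀ X P, where ‖X‖ is the ℓ²-operator norm of X. Then every eigenvalue μ ∈ ℂ of M (as a complex matrix) is real and satisfies 0 ≤ μ < 1; in particular the spectral radius of M is strictly less than 1. -/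
open Matrix

/-- The `ℓ²`-operator norm of a (possibly rectangular) real matrix. -/
noncomputable def l2OpNorm {n p : ℕ} (X : Matrix (Fin n) (Fin p) ℝ) : ℝ :=
  ‖LinearMap.toContinuousLinearMap (Matrix.toEuclideanLin X)‖

namespace Stmt9Aux

variable {a b k : ℕ}

/-- Complexification of a real matrix. -/
noncomputable def cmap (A : Matrix (Fin a) (Fin b) ℝ) : Matrix (Fin a) (Fin b) ℂ :=
  A.map (fun x : ℝ => (x : ℂ))

/-- Complexification of a real vector. -/
noncomputable def cvec (v : Fin a → ℝ) : Fin a → ℂ := fun i => (v i : ℂ)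

lemma cmap_eq (A : Matrix (Fin a) (Fin b) ℝ) : cmap A = A.map Complex.ofRealHom := rfl

lemma cmap_mul (A : Matrix (Fin a) (Fin b) ℝ) (B : Matrix (Fin b) (Fin k) ℝ) :
    cmap (A * B) = cmap A * cmap B := by
  simp only [cmap_eq]
  exact Matrix.map_mul

lemma cmap_sub (A B : Matrix (Fin a) (Fin b) ℝ) : cmap (A - B) = cmap A - cmap B := by
  ext i j
  simp [cmap, Matrix.map_apply]

lemma cmap_smul (c : ℝ) (A : Matrix (Fin a) (Fin b) ℝ) :
    cmap (c • A) = (c : ℂ) • cmap A := by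
  ext i j
  simp [cmap, Matrix.map_apply]

lemma cmap_one : cmap (1 : Matrix (Fin a) (Fin a) ℝ) = 1 :=
  Matrix.map_one _ (by simp) (by simp)

lemma cmap_transpose (A : Matrix (Fin a) (Fin b) ℝ) : cmap Aᵀ = (cmap A)ᵀ :=
  Matrix.transpose_map

lemma cmap_mulVec (A : Matrix (Fin a) (Fin b) ℝ) (v : Fin b → ℝ) :
    cmap A *ᵥ cvec v = cvec (A *ᵥ v) := by
  funext i
  exact (RingHom.map_mulVec Complex.ofRealHom A v i).symm

lemma cvec_dot (u w : Fin a → ℝ) : cvec u ⬝ᵥ cvec w = ((u ⬝ᵥ w : ℝ) : ℂ) :=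
  (RingHom.map_dotProduct Complex.ofRealHom u w).symm

lemma cmap_mulVec_star (A : Matrix (Fin a) (Fin b) ℝ) (v : Fin b → ℂ) :
    cmap A *ᵥ star v = star (cmap A *ᵥ v) := by
  funext i
  simp [cmap, Matrix.mulVec, dotProduct, Matrix.map_apply, map_sum, Complex.conj_ofReal]

lemma cvec_decomp (v : Fin a → ℂ) :
    v = cvec (fun i => (v i).re) + Complex.I • cvec (fun i => (v i).im) := by
  funext i; simp [cvec, Complex.ext_iff]

lemma star_decomp (u w : Fin a → ℝ) :
    star (cvec u + Complex.I • cvec w) = cvec u - Complex.I • cvec w := by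
  funext i; simp [cvec, Complex.ext_iff]

lemma decomp_apply (u w : Fin a → ℝ) (i : Fin a) :
    (cvec u + Complex.I • cvec w) i = Complex.mk (u i) (w i) := by
  simp [cvec, Complex.ext_iff]

lemma decomp_inj {u w u' w' : Fin a → ℝ}
    (h : cvec u + Complex.I • cvec w = cvec u' + Complex.I • cvec w') :
    u = u' ∧ w = w' := by
  constructor <;> funext i <;>
  · have h1 := congrFun h i
    rw [decomp_apply, decomp_apply, Complex.mk.injEq] at h1
    first
      | exact h1.1
      | exact h1.2

lemma dot_expand (u1 w1 u2 w2 : Fin a → ℝ) :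
    (cvec u1 - Complex.I • cvec w1) ⬝ᵥ (cvec u2 + Complex.I • cvec w2)
      = ((u1 ⬝ᵥ u2 + w1 ⬝ᵥ w2 : ℝ) : ℂ)
        + Complex.I * ((u1 ⬝ᵥ w2 - w1 ⬝ᵥ u2 : ℝ) : ℂ) := by
  simp only [sub_dotProduct, dotProduct_add, smul_dotProduct,
    dotProduct_smul, cvec_dot, smul_eq_mul]
  push_cast; ring_nf; simp [Complex.I_sq]

lemma sym_dot {R : Matrix (Fin a) (Fin a) ℝ} (hR : Rᵀ = R) (u w : Fin a → ℝ) :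
    u ⬝ᵥ (R *ᵥ w) = w ⬝ᵥ (R *ᵥ u) := by
  rw [Matrix.dotProduct_mulVec, ← Matrix.mulVec_transpose, hR, dotProduct_comm]

lemma mulVec_decomp (A : Matrix (Fin a) (Fin b) ℝ) (u w : Fin b → ℝ) :
    cmap A *ᵥ (cvec u + Complex.I • cvec w)
      = cvec (A *ᵥ u) + Complex.I • cvec (A *ᵥ w) := by
  rw [Matrix.mulVec_add, Matrix.mulVec_smul, cmap_mulVec, cmap_mulVec]

lemma dot_star_self (u w : Fin a → ℝ) :
    star (cvec u + Complex.I • cvec w) ⬝ᵥ (cvec u + Complex.I • cvec w)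
      = ((u ⬝ᵥ u + w ⬝ᵥ w : ℝ) : ℂ) := by
  rw [star_decomp, dot_expand, dotProduct_comm u w]
  simp

lemma quad_eq {R : Matrix (Fin a) (Fin a) ℝ} (hR : Rᵀ = R) (v : Fin a → ℂ) :
    star v ⬝ᵥ (cmap R *ᵥ v)
      = (((fun i => (v i).re) ⬝ᵥ (R *ᵥ (fun i => (v i).re))
          + (fun i => (v i).im) ⬝ᵥ (R *ᵥ (fun i => (v i).im)) : ℝ) : ℂ) := by
  conv_lhs => rw [cvec_decomp v]
  rw [star_decomp, mulVec_decomp, dot_expand,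
    sym_dot hR (fun i => (v i).re) (fun i => (v i).im)]
  simp

lemma dot_self_nonneg (u : Fin a → ℝ) : 0 ≤ u ⬝ᵥ u :=
  Finset.sum_nonneg fun i _ => mul_self_nonneg (u i)

lemma dot_self_pos {u : Fin a → ℝ} (hu : u ≠ 0) : 0 < u ⬝ᵥ u :=
  (dot_self_nonneg u).lt_of_ne' fun h => hu (dotProduct_self_eq_zero.mp h)

lemma euclid_norm_sq (u : Fin a → ℝ) :
    ‖((WithLp.equiv 2 (Fin a → ℝ)).symm u)‖ ^ 2 = u ⬝ᵥ u := by
  rw [EuclideanSpace.norm_eq, Real.sq_sqrt (by positivity)]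
  simp [dotProduct, WithLp.equiv_symm_apply, sq, Real.norm_eq_abs, abs_mul_abs_self]

lemma opnorm_bound (X : Matrix (Fin b) (Fin a) ℝ) (u : Fin a → ℝ) :
    (X *ᵥ u) ⬝ᵥ (X *ᵥ u) ≤ l2OpNorm X ^ 2 * (u ⬝ᵥ u) := by
  have h1 := (LinearMap.toContinuousLinearMap (Matrix.toEuclideanLin X)).le_opNorm
    ((WithLp.equiv 2 (Fin a → ℝ)).symm u)
  have h2 : (LinearMap.toContinuousLinearMap (Matrix.toEuclideanLin X))
      ((WithLp.equiv 2 (Fin a → ℝ)).symm u)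
      = (WithLp.equiv 2 (Fin b → ℝ)).symm (X *ᵥ u) := by
    rw [LinearMap.coe_toContinuousLinearMap']
    exact Matrix.toEuclideanLin_apply_piLp_toLp X u
  rw [h2] at h1
  have h3 := pow_le_pow_left₀ (norm_nonneg _) h1 2
  rw [euclid_norm_sq, mul_pow, euclid_norm_sq] at h3
  exact h3

lemma l2OpNorm_pos {X : Matrix (Fin b) (Fin a) ℝ} (hX : X ≠ 0) : 0 < l2OpNorm X := by
  rw [l2OpNorm]
  rw [norm_pos_iff]
  intro h
  apply hX
  have h1 : Matrix.toEuclideanLin X = 0 := by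
    exact_mod_cast (LinearEquiv.map_eq_zero_iff _).mp h
  exact (LinearEquiv.map_eq_zero_iff _).mp h1

end Stmt9Aux

open Stmt9Aux

/-- Spectral radius bound for the DGD linearization matrix
`M = P - ‖X‖⁻² • P (I + H)⁻¹ P Xᵀ X P`: under restricted injectivity of `X`
on the range of the orthogonal projection `P`, all complex eigenvalues of `M`
are real and lie in `[0, 1)`. -/
theorem stmt_9 {n p : ℕ} (hp : 1 ≤ p) (hn : 1 ≤ n)
    (P H : Matrix (Fin p) (Fin p) ℝ) (X : Matrix (Fin n) (Fin p) ℝ)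
    (hPsym : Pᵀ = P) (hPproj : P * P = P)
    (hH : H.PosSemidef) (hHP : H = P * H * P)
    (hX : X ≠ 0)
    (hinj : ∀ v : Fin p → ℝ, X.mulVec v = 0 → P.mulVec v = v → v = 0) :
    ∀ μ ∈ spectrum ℂ
        ((P - ((l2OpNorm X) ^ 2)⁻¹ • (P * (1 + H)⁻¹ * P * Xᵀ * X * P)).map
          (fun x : ℝ => (x : ℂ))),
      μ.im = 0 ∧ 0 ≤ μ.re ∧ μ.re < 1 := by
  intro μ hμ
  set c : ℝ := ((l2OpNorm X) ^ 2)⁻¹ with hc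
  set Mr : Matrix (Fin p) (Fin p) ℝ := P - c • (P * (1 + H)⁻¹ * P * Xᵀ * X * P) with hMr
  have hμ' : μ ∈ spectrum ℂ (cmap Mr) := hμ
  -- extract an eigenvector
  rw [spectrum.mem_iff, Matrix.isUnit_iff_isUnit_det, isUnit_iff_ne_zero, not_ne_iff] at hμ'
  obtain ⟨v, hv0, hveq⟩ := Matrix.exists_mulVec_eq_zero_iff.mpr hμ'
  have hMv : cmap Mr *ᵥ v = μ • v := by
    rw [Algebra.algebraMap_eq_smul_one, Matrix.sub_mulVec, Matrix.smul_mulVec,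
      Matrix.one_mulVec, sub_eq_zero] at hveq
    exact hveq.symm
  by_cases hμ0 : μ = 0
  · subst hμ0; simp
  -- real matrix algebra
  have hHsym : Hᵀ = H := by
    rw [← Matrix.conjTranspose_eq_transpose_of_trivial]
    exact hH.1
  have hQsym : (1 + H)ᵀ = 1 + H := by
    rw [Matrix.transpose_add, Matrix.transpose_one, hHsym]
  have hQpd : (1 + H).PosDef := Matrix.PosDef.add_posSemidef Matrix.PosDef.one hH
  have hdet : IsUnit (1 + H).det := (Matrix.isUnit_iff_isUnit_det (1 + H)).mp hQpd.isUnit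
  have hQA : (1 + H) * (1 + H)⁻¹ = 1 := Matrix.mul_nonsing_inv (1 + H) hdet
  have hAQ : (1 + H)⁻¹ * (1 + H) = 1 := Matrix.nonsing_inv_mul (1 + H) hdet
  have hPH : P * H = H := by
    calc P * H = P * (P * H * P) := by rw [← hHP]
    _ = (P * P) * H * P := by simp [Matrix.mul_assoc]
    _ = P * H * P := by rw [hPproj]
    _ = H := hHP.symm
  have hHPr : H * P = H := by
    calc H * P = (P * H * P) * P := by rw [← hHP]
    _ = P * H * (P * P) := by simp [Matrix.mul_assoc]
    _ = P * H * P := by rw [hPproj]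
    _ = H := hHP.symm
  have hPQ : P * (1 + H) = (1 + H) * P := by
    rw [Matrix.mul_add, Matrix.add_mul, Matrix.mul_one, Matrix.one_mul, hPH, hHPr]
  have hPA : P * (1 + H)⁻¹ = (1 + H)⁻¹ * P := by
    calc P * (1 + H)⁻¹ = ((1 + H)⁻¹ * (1 + H)) * (P * (1 + H)⁻¹) := by
          rw [hAQ, Matrix.one_mul]
    _ = (1 + H)⁻¹ * ((1 + H) * P) * (1 + H)⁻¹ := by simp [Matrix.mul_assoc]
    _ = (1 + H)⁻¹ * (P * (1 + H)) * (1 + H)⁻¹ := by rw [hPQ]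
    _ = ((1 + H)⁻¹ * P) * ((1 + H) * (1 + H)⁻¹) := by simp [Matrix.mul_assoc]
    _ = (1 + H)⁻¹ * P := by rw [hQA, Matrix.mul_one]
  have hPPterm : P * (P * (1 + H)⁻¹ * P * Xᵀ * X * P)
      = P * (1 + H)⁻¹ * P * Xᵀ * X * P := by
    calc P * (P * (1 + H)⁻¹ * P * Xᵀ * X * P)
        = (P * P) * (1 + H)⁻¹ * P * Xᵀ * X * P := by simp [Matrix.mul_assoc]
    _ = P * (1 + H)⁻¹ * P * Xᵀ * X * P := by rw [hPproj]
  have hPM : P * Mr = Mr := by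
    rw [hMr, Matrix.mul_sub, Matrix.mul_smul, hPproj, hPPterm]
  have h5 : P * (1 + H)⁻¹ * P = (1 + H)⁻¹ * P := by
    rw [hPA, Matrix.mul_assoc, hPproj]
  have hkey : (1 + H) * Mr = (1 + H) * P - c • (P * Xᵀ * X * P) := by
    rw [hMr, Matrix.mul_sub, Matrix.mul_smul, h5]
    congr 2
    calc (1 + H) * ((1 + H)⁻¹ * P * Xᵀ * X * P)
        = ((1 + H) * (1 + H)⁻¹) * P * Xᵀ * X * P := by simp [Matrix.mul_assoc]
    _ = P * Xᵀ * X * P := by rw [hQA, Matrix.one_mul]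
  -- complexified identities
  have hPMc : cmap P * cmap Mr = cmap Mr := by
    rw [← cmap_mul, hPM]
  have hkeyc : cmap (1 + H) * cmap Mr
      = cmap (1 + H) * cmap P - (c : ℂ) • (cmap P * cmap Xᵀ * cmap X * cmap P) := by
    have h := congrArg cmap hkey
    simpa only [cmap_mul, cmap_sub, cmap_smul] using h
  have hPv : cmap P *ᵥ v = v := by
    have h1 : cmap P *ᵥ (cmap Mr *ᵥ v) = cmap Mr *ᵥ v := by
      rw [Matrix.mulVec_mulVec, hPMc]
    rw [hMv, Matrix.mulVec_smul] at h1
    exact smul_right_injective (Fin p → ℂ) hμ0 h1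
  set w : Fin n → ℂ := cmap X *ᵥ v with hw
  have e1 : μ • (cmap (1 + H) *ᵥ v)
      = cmap (1 + H) *ᵥ v - (c : ℂ) • (cmap P *ᵥ (cmap Xᵀ *ᵥ w)) := by
    calc μ • (cmap (1 + H) *ᵥ v) = cmap (1 + H) *ᵥ (μ • v) := (Matrix.mulVec_smul _ _ _).symm
    _ = cmap (1 + H) *ᵥ (cmap Mr *ᵥ v) := by rw [hMv]
    _ = (cmap (1 + H) * cmap Mr) *ᵥ v := Matrix.mulVec_mulVec _ _ _
    _ = (cmap (1 + H) * cmap P) *ᵥ v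
          - (c : ℂ) • ((cmap P * cmap Xᵀ * cmap X * cmap P) *ᵥ v) := by
        rw [hkeyc, Matrix.sub_mulVec, Matrix.smul_mulVec]
    _ = cmap (1 + H) *ᵥ v - (c : ℂ) • (cmap P *ᵥ (cmap Xᵀ *ᵥ w)) := by
        simp only [← Matrix.mulVec_mulVec, hPv, hw]
  have e2 : μ * (star v ⬝ᵥ (cmap (1 + H) *ᵥ v))
      = star v ⬝ᵥ (cmap (1 + H) *ᵥ v)
        - (c : ℂ) * (star v ⬝ᵥ (cmap P *ᵥ (cmap Xᵀ *ᵥ w))) := by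
    have h := congrArg (fun z => star v ⬝ᵥ z) e1
    simpa only [dotProduct_smul, dotProduct_sub, smul_eq_mul] using h
  have e3 : star v ⬝ᵥ (cmap P *ᵥ (cmap Xᵀ *ᵥ w)) = star w ⬝ᵥ w := by
    rw [Matrix.dotProduct_mulVec (star v), ← Matrix.mulVec_transpose, ← cmap_transpose,
      hPsym, cmap_mulVec_star, hPv, Matrix.dotProduct_mulVec, ← Matrix.mulVec_transpose,
      ← cmap_transpose, Matrix.transpose_transpose, cmap_mulVec_star]
  set va : Fin p → ℝ := fun i => (v i).re with hva
  set vb : Fin p → ℝ := fun i => (v i).im with hvb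
  have hq : star v ⬝ᵥ (cmap (1 + H) *ᵥ v) = ((va ⬝ᵥ ((1 + H) *ᵥ va) + vb ⬝ᵥ ((1 + H) *ᵥ vb) : ℝ) : ℂ) :=
    quad_eq hQsym v
  have hw_decomp : w = cvec (X *ᵥ va) + Complex.I • cvec (X *ᵥ vb) := by
    rw [hw]
    conv_lhs => rw [cvec_decomp v]
    exact mulVec_decomp X va vb
  have hs : star w ⬝ᵥ w = (((X *ᵥ va) ⬝ᵥ (X *ᵥ va) + (X *ᵥ vb) ⬝ᵥ (X *ᵥ vb) : ℝ) : ℂ) := by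
    rw [hw_decomp]
    exact dot_star_self _ _
  set qr : ℝ := va ⬝ᵥ ((1 + H) *ᵥ va) + vb ⬝ᵥ ((1 + H) *ᵥ vb) with hqr
  set sr : ℝ := (X *ᵥ va) ⬝ᵥ (X *ᵥ va) + (X *ᵥ vb) ⬝ᵥ (X *ᵥ vb) with hsr
  set tr : ℝ := va ⬝ᵥ va + vb ⬝ᵥ vb with htr
  -- basic positivity facts
  have hQuad : ∀ u : Fin p → ℝ, u ⬝ᵥ u ≤ u ⬝ᵥ ((1 + H) *ᵥ u) := by
    intro u
    have h1 : (1 + H) *ᵥ u = u + H *ᵥ u := by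
      rw [Matrix.add_mulVec, Matrix.one_mulVec]
    rw [h1, dotProduct_add]
    have h2 := hH.dotProduct_mulVec_nonneg u
    rw [star_trivial] at h2
    linarith
  have htr_qr : tr ≤ qr := add_le_add (hQuad va) (hQuad vb)
  have htr_pos : 0 < tr := by
    have hab : va ≠ 0 ∨ vb ≠ 0 := by
      by_contra hcon
      push_neg at hcon
      apply hv0
      funext i
      have h1 := congrFun hcon.1 i
      have h2 := congrFun hcon.2 i
      simp only [hva, hvb, Pi.zero_apply] at h1 h2
      exact Complex.ext h1 h2
    rcases hab with h | h
    · have := dot_self_pos h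
      have := dot_self_nonneg vb
      rw [htr]; linarith
    · have := dot_self_pos h
      have := dot_self_nonneg va
      rw [htr]; linarith
  have hqr_pos : 0 < qr := lt_of_lt_of_le htr_pos htr_qr
  have hN : 0 < l2OpNorm X := l2OpNorm_pos hX
  have hN2 : 0 < l2OpNorm X ^ 2 := by positivity
  have hc_pos : 0 < c := by rw [hc]; positivity
  have hsr_nonneg : 0 ≤ sr := by
    have := dot_self_nonneg (X *ᵥ va)
    have := dot_self_nonneg (X *ᵥ vb)
    rw [hsr]; linarith
  have hsr_le : sr ≤ l2OpNorm X ^ 2 * tr := by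
    have h1 := opnorm_bound X va
    have h2 := opnorm_bound X vb
    rw [hsr, htr, mul_add]; linarith
  -- P fixes the real and imaginary parts
  have hPab : P *ᵥ va = va ∧ P *ᵥ vb = vb := by
    have h1 : cvec (P *ᵥ va) + Complex.I • cvec (P *ᵥ vb)
        = cvec va + Complex.I • cvec vb := by
      rw [← mulVec_decomp, ← cvec_decomp v, hPv]
    exact decomp_inj h1
  have hsr_pos : 0 < sr := by
    rcases lt_or_eq_of_le hsr_nonneg with h | h
    · exact h
    have h1 : (X *ᵥ va) ⬝ᵥ (X *ᵥ va) = 0 := by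
      have := dot_self_nonneg (X *ᵥ va)
      have := dot_self_nonneg (X *ᵥ vb)
      rw [hsr] at h; linarith
    have h2 : (X *ᵥ vb) ⬝ᵥ (X *ᵥ vb) = 0 := by
      have := dot_self_nonneg (X *ᵥ va)
      have := dot_self_nonneg (X *ᵥ vb)
      rw [hsr] at h; linarith
    have ha0 : va = 0 := hinj va (dotProduct_self_eq_zero.mp h1) hPab.1
    have hb0 : vb = 0 := hinj vb (dotProduct_self_eq_zero.mp h2) hPab.2
    exfalso
    rw [htr, ha0, hb0] at htr_pos
    simp at htr_pos
  -- conclude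
  have hfin : μ * (qr : ℂ) = (qr : ℂ) - (c : ℂ) * (sr : ℂ) := by
    rw [← hq, ← hs, ← e3]
    exact e2
  have hqrC : (qr : ℂ) ≠ 0 := by
    exact_mod_cast hqr_pos.ne'
  have hμeq : μ = (((qr - c * sr) / qr : ℝ) : ℂ) := by
    have : μ = ((qr : ℂ) - (c : ℂ) * (sr : ℂ)) / (qr : ℂ) := by
      rw [eq_div_iff hqrC]; exact hfin
    rw [this]; push_cast; ring
  have hcsr_le : c * sr ≤ qr := by
    have h1 : c * sr ≤ c * (l2OpNorm X ^ 2 * tr) :=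
      mul_le_mul_of_nonneg_left hsr_le hc_pos.le
    have h2 : c * (l2OpNorm X ^ 2 * tr) = tr := by
      rw [hc, ← mul_assoc, inv_mul_cancel₀ hN2.ne', one_mul]
    linarith
  have hcsr_pos : 0 < c * sr := mul_pos hc_pos hsr_pos
  refine ⟨?_, ?_, ?_⟩
  · rw [hμeq]; simp
  · rw [hμeq]
    simp only [Complex.ofReal_re]
    apply div_nonneg _ hqr_pos.le
    linarith
  · rw [hμeq]
    simp only [Complex.ofReal_re]
    rw [div_lt_one hqr_pos]
    linarith
end
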